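/- For integers n ≥ 1 and real s > -1, and for |t| < 1, the power series identity Σ_{k≥0} (n+s+2)_k t^k / (k! (n+k)) = t^{-n} Σ_{j=0}^{n-1} C(n-1, j) (-1)^j [ (1-t)^{j-n-s-1} - 1 ] / (s+n+1-j) holds (for t ≠ 0). -/

import Mathlib

open Polynomial Finset Filter

noncomputable def AA (ν : ℝ) (k : ℕ) : ℝ := (ascPochhammer ℝ k).eval ν

lemma AA_zero (ν : ℝ) : AA ν 0 = 1 := by simp [AA]

lemma AA_succ (ν : ℝ) (k : ℕ) : AA ν (k + 1) = AA ν k * (ν + k) := by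
  simp [AA, ascPochhammer_succ_eval]

lemma AA_pos {ν : ℝ} (hν : 0 < ν) (k : ℕ) : 0 < AA ν k := by
  induction k with
  | zero => simp [AA_zero]
  | succ k ih => rw [AA_succ]; positivity

lemma tendsto_aux (c : ℝ) : Tendsto (fun k : ℕ => c / ((k : ℝ) + 1)) atTop (nhds 0) := by
  have := (tendsto_const_div_atTop_nhds_zero_nat c).comp (tendsto_add_atTop_nat 1)
  rw [show (fun k : ℕ => c / ((k : ℝ) + 1)) = ((fun n : ℕ => c / (n:ℝ)) ∘ fun a => a + 1) by
    ext k; simp]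
  exact this

lemma summable_main {ν : ℝ} (hν : 0 < ν) {r : ℝ} (hr0 : 0 < r) (hr1 : r < 1) :
    Summable (fun k : ℕ => AA ν k * (k + 1) * r ^ k / k.factorial) := by
  apply summable_of_ratio_test_tendsto_lt_one hr1
  · filter_upwards with k
    have h1 := AA_pos hν k
    have h2 : (0:ℝ) < k.factorial := by positivity
    positivity
  · have key : ∀ k : ℕ, ‖AA ν (k+1) * ((k:ℝ) + 1 + 1) * r ^ (k+1) / (k+1).factorial‖ /
        ‖AA ν k * ((k:ℝ) + 1) * r ^ k / k.factorial‖
        = r * (1 + (ν - 1) / ((k:ℝ) + 1)) * (1 + 1 / ((k:ℝ) + 1)) := by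
      intro k
      have h1 := AA_pos hν k
      have h1' := AA_pos hν (k+1)
      have h2 : (0:ℝ) < k.factorial := by positivity
      have h2' : (0:ℝ) < (k+1).factorial := by positivity
      have h3 : (0:ℝ) < ν + k := by positivity
      have h4 : ((k:ℝ) + 1) ≠ 0 := by positivity
      rw [Real.norm_eq_abs, Real.norm_eq_abs, abs_of_pos (by positivity),
        abs_of_pos (by positivity), AA_succ, Nat.factorial_succ]
      push_cast
      field_simp
      ring
    have conv : Tendsto (fun k : ℕ => r * (1 + (ν - 1) / ((k:ℝ) + 1)) * (1 + 1 / ((k:ℝ) + 1)))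
        atTop (nhds r) := by
      have := ((tendsto_const_nhds (x := r) (f := atTop (α := ℕ))).mul
        ((tendsto_const_nhds (x := (1:ℝ))).add (tendsto_aux (ν - 1)))).mul
        ((tendsto_const_nhds (x := (1:ℝ))).add (tendsto_aux 1))
      simpa using this
    refine conv.congr fun k => ?_
    rw [← key k]
    norm_num

lemma summable_of_le_main {ν : ℝ} (hν : 0 < ν) {r : ℝ} (hr0 : 0 < r) (hr1 : r < 1)
    {f : ℕ → ℝ} (hf : ∀ k, ‖f k‖ ≤ AA ν k * (k + 1) * r ^ k / k.factorial) :
    Summable f :=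
  Summable.of_norm <| Summable.of_nonneg_of_le (fun k => norm_nonneg _) hf
    (summable_main hν hr0 hr1)

lemma summable_of_le_main_div {ν : ℝ} (hν : 0 < ν) {r : ℝ} (hr0 : 0 < r) (hr1 : r < 1)
    {f : ℕ → ℝ} (hf : ∀ k, ‖f k‖ ≤ AA ν k * (k + 1) * r ^ k / k.factorial / r) :
    Summable f :=
  Summable.of_norm <| Summable.of_nonneg_of_le (fun k => norm_nonneg _) hf
    ((summable_main hν hr0 hr1).div_const r)

-- basic arithmetic helper
lemma bound_helper {ν : ℝ} (hν : 0 < ν) (k : ℕ) {c d : ℝ} (hc : 0 ≤ c) (hcd : c ≤ (k + 1) * d) :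
    AA ν k * c / k.factorial ≤ AA ν k * (k + 1) * d / k.factorial := by
  have h1 := (AA_pos hν k).le
  have h2 : (0:ℝ) < (k.factorial : ℝ) := by positivity
  rw [div_le_div_iff₀ h2 h2, mul_assoc]
  have := mul_le_mul_of_nonneg_left hcd h1
  nlinarith

lemma summable_A {ν : ℝ} (hν : 0 < ν) {x : ℝ} (hx : |x| < 1) :
    Summable (fun k : ℕ => AA ν k * x ^ k / k.factorial) := by
  set r : ℝ := (|x| + 1) / 2 with hr
  have hr0 : 0 < r := by positivity
  have hr1 : r < 1 := by rw [hr]; linarith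
  have hxr : |x| ≤ r := by rw [hr]; linarith
  refine summable_of_le_main hν hr0 hr1 fun k => ?_
  have h1 := (AA_pos hν k).le
  have h2 : (0:ℝ) ≤ (k.factorial : ℝ) := by positivity
  have e : ‖AA ν k * x ^ k / k.factorial‖ = AA ν k * |x| ^ k / k.factorial := by
    rw [Real.norm_eq_abs, abs_div, abs_mul, abs_of_nonneg h1, abs_pow, abs_of_nonneg h2]
  rw [e]
  refine bound_helper hν k (by positivity) ?_
  have h3 : |x| ^ k ≤ r ^ k := pow_le_pow_left₀ (abs_nonneg x) hxr k
  nlinarith [pow_nonneg (abs_nonneg x) k, pow_nonneg hr0.le k,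
    mul_le_mul_of_nonneg_left h3 (by positivity : (0:ℝ) ≤ (k:ℝ))]

lemma AA_succ_left (ν : ℝ) (k : ℕ) : AA ν (k + 1) = ν * AA (ν + 1) k := by
  simp [AA, ascPochhammer_succ_left, eval_comp, mul_comm]

lemma summable_A_shift {ν : ℝ} (hν : 0 < ν) {x : ℝ} (hx : |x| < 1) :
    Summable (fun k : ℕ => AA ν (k + 1) * x ^ k / k.factorial) := by
  have := (summable_A (ν := ν + 1) (by linarith) hx).mul_left ν
  refine this.congr fun k => ?_
  rw [AA_succ_left]
  ring

lemma summable_A_mul_k {ν : ℝ} (hν : 0 < ν) {x : ℝ} (hx : |x| < 1) :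
    Summable (fun k : ℕ => (k : ℝ) * AA ν k * x ^ k / k.factorial) := by
  set r : ℝ := (|x| + 1) / 2 with hr
  have hr0 : 0 < r := by positivity
  have hr1 : r < 1 := by rw [hr]; linarith
  have hxr : |x| ≤ r := by rw [hr]; linarith
  refine summable_of_le_main hν hr0 hr1 fun k => ?_
  have h1 := (AA_pos hν k).le
  have h2 : (0:ℝ) ≤ (k.factorial : ℝ) := by positivity
  have e : ‖(k : ℝ) * AA ν k * x ^ k / k.factorial‖
      = AA ν k * ((k : ℝ) * |x| ^ k) / k.factorial := by
    rw [Real.norm_eq_abs, abs_div, abs_mul, abs_mul, abs_of_nonneg h1, abs_pow,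
      abs_of_nonneg h2, abs_of_nonneg (by positivity : (0:ℝ) ≤ (k:ℝ))]
    ring
  rw [e]
  refine bound_helper hν k (by positivity) ?_
  have h3 : |x| ^ k ≤ r ^ k := pow_le_pow_left₀ (abs_nonneg x) hxr k
  nlinarith [pow_nonneg (abs_nonneg x) k, pow_nonneg hr0.le k,
    mul_le_mul_of_nonneg_left h3 (by positivity : (0:ℝ) ≤ (k:ℝ))]

lemma deriv_term_bound {ν : ℝ} (hν : 0 < ν) {r : ℝ} (hr0 : 0 < r) {y : ℝ} (hyr : |y| ≤ r)
    (k : ℕ) : ‖AA ν k / k.factorial * ((k : ℝ) * y ^ (k - 1))‖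
      ≤ AA ν k * (k + 1) * r ^ k / k.factorial / r := by
  have h1 := (AA_pos hν k).le
  have h2 : (0:ℝ) < (k.factorial : ℝ) := by positivity
  have e : ‖AA ν k / k.factorial * ((k : ℝ) * y ^ (k - 1))‖
      = AA ν k * ((k : ℝ) * |y| ^ (k - 1)) / k.factorial := by
    rw [Real.norm_eq_abs, abs_mul, abs_div, abs_mul, abs_of_nonneg h1, abs_pow,
      abs_of_nonneg h2.le, abs_of_nonneg (by positivity : (0:ℝ) ≤ (k:ℝ))]
    ring
  rw [e, div_div, div_le_div_iff₀ h2 (by positivity)]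
  have goal2 : (k : ℝ) * |y| ^ (k - 1) * r ≤ (k + 1) * r ^ k := by
    cases k with
    | zero => simp
    | succ m =>
      have h3 : |y| ^ m ≤ r ^ m := pow_le_pow_left₀ (abs_nonneg y) hyr m
      have : (m + 1 : ℝ) * |y| ^ m * r ≤ (m + 1 : ℝ) * r ^ m * r := by
        have := mul_le_mul_of_nonneg_left h3 (by positivity : (0:ℝ) ≤ (m:ℝ) + 1)
        nlinarith
      simp only [Nat.add_sub_cancel, pow_succ]
      push_cast
      nlinarith [pow_nonneg hr0.le m]
  calc AA ν k * ((k : ℝ) * |y| ^ (k - 1)) * (k.factorial * r)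
      = AA ν k * ((k : ℝ) * |y| ^ (k - 1) * r) * k.factorial := by ring
    _ ≤ AA ν k * ((k + 1) * r ^ k) * k.factorial := by
        nlinarith [h2.le, mul_le_mul_of_nonneg_right
          (mul_le_mul_of_nonneg_left goal2 h1) h2.le]
    _ = AA ν k * (k + 1) * r ^ k * k.factorial := by ring

lemma hasDerivAt_f {ν : ℝ} (hν : 0 < ν) {x : ℝ} (hx : |x| < 1) :
    HasDerivAt (fun y : ℝ => ∑' k : ℕ, AA ν k * y ^ k / k.factorial)
      (∑' k : ℕ, AA ν (k + 1) * x ^ k / k.factorial) x := by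
  set r : ℝ := (|x| + 1) / 2 with hr
  have hr0 : 0 < r := by positivity
  have hr1 : r < 1 := by rw [hr]; linarith
  have hxr : |x| < r := by rw [hr]; linarith
  have key : HasDerivAt (fun y : ℝ => ∑' k : ℕ, AA ν k * y ^ k / k.factorial)
      (∑' k : ℕ, AA ν k / k.factorial * ((k : ℝ) * x ^ (k - 1))) x := by
    refine hasDerivAt_tsum_of_isPreconnected
      (u := fun k : ℕ => AA ν k * (k + 1) * r ^ k / k.factorial / r)
      ((summable_main hν hr0 hr1).div_const r) (isOpen_Ioo (a := -r) (b := r))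
      (Convex.isPreconnected (convex_Ioo _ _)) (g := fun k y => AA ν k * y ^ k / k.factorial)
      (g' := fun k y => AA ν k / k.factorial * ((k : ℝ) * y ^ (k - 1))) ?_ ?_
      (y₀ := 0) (by constructor <;> [linarith; linarith]) ?_ (abs_lt.mp hxr)
    · intro k y _
      have h := (hasDerivAt_pow k y).const_mul (AA ν k / k.factorial)
      exact h.congr_of_eventuallyEq (Filter.Eventually.of_forall fun w => by ring)
    · intro k y hy
      have hyr : |y| ≤ r := le_of_lt (abs_lt.mpr ⟨hy.1, hy.2⟩)
      exact deriv_term_bound hν hr0 hyr k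
    · refine summable_of_ne_finset_zero (s := {0}) fun k hk => ?_
      have : k ≠ 0 := by simpa using hk
      simp [zero_pow this]
  convert key using 1
  have hs : Summable (fun k : ℕ => AA ν k / k.factorial * ((k : ℝ) * x ^ (k - 1))) :=
    summable_of_le_main_div hν hr0 hr1 fun k => deriv_term_bound hν hr0 hxr.le k
  rw [hs.tsum_eq_zero_add]
  simp only [Nat.cast_zero, zero_mul, mul_zero, zero_add]
  refine tsum_congr fun k => ?_
  have h2 : ((k:ℝ) + 1) ≠ 0 := by positivity
  have h3 : ((k.factorial : ℝ)) ≠ 0 := by positivity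
  rw [Nat.factorial_succ, Nat.add_sub_cancel]
  push_cast
  field_simp

lemma key_ode {ν : ℝ} (hν : 0 < ν) {x : ℝ} (hx : |x| < 1) :
    (1 - x) * (∑' k : ℕ, AA ν (k + 1) * x ^ k / k.factorial)
      = ν * ∑' k : ℕ, AA ν k * x ^ k / k.factorial := by
  have S1 : Summable (fun k : ℕ => AA ν (k + 1) * x ^ k / k.factorial) :=
    summable_A_shift hν hx
  have S2 : Summable (fun k : ℕ => (k : ℝ) * AA ν k * x ^ k / k.factorial) :=
    summable_A_mul_k hν hx
  have hxD : x * (∑' k : ℕ, AA ν (k + 1) * x ^ k / k.factorial)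
      = ∑' k : ℕ, (k : ℝ) * AA ν k * x ^ k / k.factorial := by
    rw [← tsum_mul_left, S2.tsum_eq_zero_add]
    simp only [Nat.cast_zero, zero_mul, zero_div, zero_add]
    refine tsum_congr fun k => ?_
    rw [Nat.factorial_succ]
    have h2 : ((k:ℝ) + 1) ≠ 0 := by positivity
    have h3 : ((k.factorial : ℝ)) ≠ 0 := by positivity
    push_cast
    field_simp
    ring
  rw [sub_mul, one_mul, hxD, ← S1.tsum_sub S2, ← tsum_mul_left]
  refine tsum_congr fun k => ?_
  rw [AA_succ]
  field_simp
  ring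

lemma const_of_hasDerivAt_zero {f : ℝ → ℝ} {s : Set ℝ} (hs : Convex ℝ s) (ho : IsOpen s)
    (h : ∀ y ∈ s, HasDerivAt f 0 y) {x y : ℝ} (hx : x ∈ s) (hy : y ∈ s) : f x = f y := by
  refine hs.is_const_of_fderivWithin_eq_zero
    (fun z hz => ((h z hz).differentiableAt).differentiableWithinAt) (fun z hz => ?_) hx hy
  rw [fderivWithin_of_isOpen ho hz, (h z hz).hasFDerivAt.fderiv]
  ext w
  simp

lemma binom {ν : ℝ} (hν : 0 < ν) {x : ℝ} (hx : |x| < 1) :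
    ∑' k : ℕ, AA ν k * x ^ k / k.factorial = (1 - x) ^ (-ν) := by
  set f : ℝ → ℝ := fun y => ∑' k : ℕ, AA ν k * y ^ k / k.factorial with hf
  have hd : ∀ y ∈ Set.Ioo (-1 : ℝ) 1,
      HasDerivAt (fun z => (1 - z) ^ ν * f z) 0 y := by
    intro y hy
    have hy1 : |y| < 1 := abs_lt.mpr ⟨hy.1, hy.2⟩
    have hpos : (0:ℝ) < 1 - y := by linarith [hy.2]
    have h1 : HasDerivAt (fun z : ℝ => (1 - z) ^ ν) ((-1) * ν * (1 - y) ^ (ν - 1)) y := by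
      have hb : HasDerivAt (fun z : ℝ => 1 - z) (-1) y := (hasDerivAt_id y).const_sub 1
      exact hb.rpow_const (Or.inl hpos.ne')
    have h2 := hasDerivAt_f hν hy1
    have := h1.mul h2
    refine this.congr_deriv ?_
    have e1 : (1 - y) ^ ν = (1 - y) ^ (ν - 1) * (1 - y) := by
      rw [← Real.rpow_add_one hpos.ne' (ν - 1)]
      norm_num
    have e2 := key_ode hν hy1
    rw [e1]
    linear_combination (1 - y) ^ (ν - 1) * e2
  have hc := const_of_hasDerivAt_zero (convex_Ioo (-1 : ℝ) 1) isOpen_Ioo hd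
    (abs_lt.mp hx) (by constructor <;> norm_num : (0:ℝ) ∈ Set.Ioo (-1:ℝ) 1)
  have hf0 : f 0 = 1 := by
    show (∑' k : ℕ, AA ν k * (0:ℝ) ^ k / k.factorial) = 1
    rw [tsum_eq_single 0 (fun k hk => by simp [zero_pow hk])]
    simp [AA_zero]
  rw [show (1:ℝ) - 0 = 1 by ring, Real.one_rpow, hf0, mul_one] at hc
  have hpos : (0:ℝ) < 1 - x := by have := (abs_lt.mp hx).2; linarith
  have hne : (1 - x) ^ ν ≠ 0 := (Real.rpow_pos_of_pos hpos ν).ne'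
  have hfx : f x = ((1 - x) ^ ν)⁻¹ := by
    have := congrArg (fun z => ((1 - x) ^ ν)⁻¹ * z) hc
    simpa [← mul_assoc, inv_mul_cancel₀ hne] using this
  show f x = (1 - x) ^ (-ν)
  rw [Real.rpow_neg hpos.le]
  exact hfx

lemma hasDerivAt_G (n : ℕ) (hn : 1 ≤ n) {ν : ℝ} (hν : 0 < ν) {y : ℝ} (hy : |y| < 1) :
    HasDerivAt (fun z : ℝ => ∑' k : ℕ, AA ν k * z ^ (n + k) / (k.factorial * ((n:ℝ) + k)))
      (y ^ (n - 1) * (1 - y) ^ (-ν)) y := by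
  have hn1 : (1:ℝ) ≤ (n:ℝ) := by exact_mod_cast hn
  set r : ℝ := (|y| + 1) / 2 with hr
  have hr0 : 0 < r := by positivity
  have hr1 : r < 1 := by rw [hr]; linarith
  have hyr : |y| < r := by rw [hr]; linarith
  have key : HasDerivAt (fun z : ℝ => ∑' k : ℕ, AA ν k * z ^ (n + k) / (k.factorial * ((n:ℝ) + k)))
      (∑' k : ℕ, AA ν k / (k.factorial * ((n:ℝ) + k)) * (((n:ℝ) + k) * y ^ (n + k - 1))) y := by
    refine hasDerivAt_tsum_of_isPreconnected
      (u := fun k : ℕ => AA ν k * (k + 1) * r ^ k / k.factorial)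
      (summable_main hν hr0 hr1) (isOpen_Ioo (a := -r) (b := r))
      (Convex.isPreconnected (convex_Ioo _ _))
      (g := fun k z => AA ν k * z ^ (n + k) / (k.factorial * ((n:ℝ) + k)))
      (g' := fun k z => AA ν k / (k.factorial * ((n:ℝ) + k)) * (((n:ℝ) + k) * z ^ (n + k - 1)))
      ?_ ?_ (y₀ := 0) (by constructor <;> [linarith; linarith]) ?_ (abs_lt.mp hyr)
    · intro k z _
      have h := (hasDerivAt_pow (n + k) z).const_mul (AA ν k / (k.factorial * ((n:ℝ) + k)))
      have hfun : (fun w : ℝ => AA ν k * w ^ (n + k) / (k.factorial * ((n:ℝ) + k)))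
          = fun w : ℝ => AA ν k / (k.factorial * ((n:ℝ) + k)) * w ^ (n + k) := by
        funext w; ring
      show HasDerivAt (fun w : ℝ => AA ν k * w ^ (n + k) / (k.factorial * ((n:ℝ) + k)))
        (AA ν k / (k.factorial * ((n:ℝ) + k)) * (((n:ℝ) + k) * z ^ (n + k - 1))) z
      rw [hfun]
      refine h.congr_deriv ?_
      push_cast
      ring
    · intro k z hz
      have hzr : |z| ≤ r := le_of_lt (abs_lt.mpr ⟨hz.1, hz.2⟩)
      have h1 := (AA_pos hν k).le
      have h2 : (0:ℝ) < (k.factorial : ℝ) := by positivity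
      have h3 : (0:ℝ) < (n:ℝ) + k := by
        have : (0:ℝ) ≤ (k:ℝ) := by positivity
        linarith
      have e : ‖AA ν k / (k.factorial * ((n:ℝ) + k)) * (((n:ℝ) + k) * z ^ (n + k - 1))‖
          = AA ν k * |z| ^ (n + k - 1) / k.factorial := by
        rw [Real.norm_eq_abs, abs_mul, abs_div, abs_mul, abs_mul, abs_of_nonneg h1, abs_pow,
          abs_of_nonneg h2.le, abs_of_nonneg h3.le]
        field_simp

      rw [e]
      refine bound_helper hν k (by positivity) ?_
      have h4 : |z| ^ (n + k - 1) ≤ r ^ (n + k - 1) :=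
        pow_le_pow_left₀ (abs_nonneg z) hzr _
      have h5 : r ^ (n + k - 1) ≤ r ^ k :=
        pow_le_pow_of_le_one hr0.le hr1.le (by omega)
      nlinarith [pow_nonneg hr0.le k]
    · refine summable_of_ne_finset_zero (s := ∅) fun k _ => ?_
      simp [zero_pow (show n + k ≠ 0 by omega)]
  convert key using 1
  have e : ∀ k : ℕ, AA ν k / (k.factorial * ((n:ℝ) + k)) * (((n:ℝ) + k) * y ^ (n + k - 1))
      = y ^ (n - 1) * (AA ν k * y ^ k / k.factorial) := by
    intro k
    have h2 : ((k.factorial : ℝ)) ≠ 0 := by positivity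
    have h3 : ((n:ℝ) + k) ≠ 0 := by
      have : (0:ℝ) ≤ (k:ℝ) := by positivity
      have : (1:ℝ) ≤ (n:ℝ) := by exact_mod_cast hn
      linarith
    rw [show n + k - 1 = (n - 1) + k by omega, pow_add]
    field_simp

  rw [tsum_congr e, tsum_mul_left, binom hν hy]

lemma hasDerivAt_H (n : ℕ) (hn : 1 ≤ n) (s : ℝ) (hs : -1 < s) {y : ℝ} (hy : |y| < 1) :
    HasDerivAt (fun z : ℝ => ∑ j ∈ range n, ((n - 1).choose j : ℝ) * (-1) ^ j *
        (((1 - z) ^ ((j : ℝ) - n - s - 1) - 1) / (s + n + 1 - j)))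
      (y ^ (n - 1) * (1 - y) ^ (-((n:ℝ) + s + 2))) y := by
  have hpos : (0:ℝ) < 1 - y := by have := (abs_lt.mp hy).2; linarith
  have hb : ∀ j ∈ range n, (0:ℝ) < s + n + 1 - j := by
    intro j hj
    have hj' : j + 1 ≤ n := mem_range.mp hj
    have : (j:ℝ) + 1 ≤ (n:ℝ) := by exact_mod_cast hj'
    linarith
  have main : HasDerivAt (fun z : ℝ => ∑ j ∈ range n, ((n - 1).choose j : ℝ) * (-1) ^ j *
        (((1 - z) ^ ((j : ℝ) - n - s - 1) - 1) / (s + n + 1 - j)))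
      (∑ j ∈ range n, ((n - 1).choose j : ℝ) * (-1) ^ j *
        ((-1) * ((j : ℝ) - n - s - 1) * (1 - y) ^ ((j : ℝ) - n - s - 1 - 1) / (s + n + 1 - j)))
      y := by
    refine HasDerivAt.fun_sum fun j hj => ?_
    have hbase : HasDerivAt (fun z : ℝ => 1 - z) (-1) y := (hasDerivAt_id y).const_sub 1
    have h1 := hbase.rpow_const (p := (j : ℝ) - n - s - 1) (Or.inl hpos.ne')
    exact ((h1.sub_const 1).div_const (s + n + 1 - j)).const_mul _
  convert main using 1
  have e : ∀ j ∈ range n, ((n - 1).choose j : ℝ) * (-1) ^ j *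
        ((-1) * ((j : ℝ) - n - s - 1) * (1 - y) ^ ((j : ℝ) - n - s - 1 - 1) / (s + n + 1 - j))
      = (((n - 1).choose j : ℝ) * (y - 1) ^ j) * (1 - y) ^ (-((n:ℝ) + s + 2)) := by
    intro j hj
    have hbj := hb j hj
    have e1 : (j : ℝ) - n - s - 1 - 1 = (j : ℝ) + -((n:ℝ) + s + 2) := by ring
    rw [e1, Real.rpow_add hpos, Real.rpow_natCast]
    have e2 : (y - 1) ^ j = (-1) ^ j * (1 - y) ^ j := by
      rw [← neg_one_mul, ← mul_pow]
      ring_nf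
    rw [e2]
    field_simp
    ring
  rw [Finset.sum_congr rfl e, ← Finset.sum_mul]
  congr 1
  have hbinom := add_pow (y - 1) 1 (n - 1)
  simp only [one_pow, mul_one, add_sub_cancel] at hbinom
  rw [show n - 1 + 1 = n by omega] at hbinom
  rw [show y - 1 + 1 = y by ring] at hbinom
  rw [hbinom]
  refine Finset.sum_congr rfl fun j hj => ?_
  ring

theorem stmt_11 (n : ℕ) (hn : 1 ≤ n) (s : ℝ) (hs : -1 < s) (t : ℝ)
    (ht : |t| < 1) (ht0 : t ≠ 0) :
    ∑' k : ℕ, (ascPochhammer ℝ k).eval ((n : ℝ) + s + 2) * t ^ k /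
        (k.factorial * ((n : ℝ) + k))
      = t ^ (-(n : ℤ)) * ∑ j ∈ range n, ((n - 1).choose j : ℝ) * (-1) ^ j *
          (((1 - t) ^ ((j : ℝ) - n - s - 1) - 1) / (s + n + 1 - j)) := by
  have hn1 : (1:ℝ) ≤ (n:ℝ) := by exact_mod_cast hn
  set ν : ℝ := (n:ℝ) + s + 2 with hν_def
  have hν : 0 < ν := by rw [hν_def]; linarith
  set G : ℝ → ℝ := fun z => ∑' k : ℕ, AA ν k * z ^ (n + k) / (k.factorial * ((n:ℝ) + k))
    with hG_def
  set H : ℝ → ℝ := fun z => ∑ j ∈ range n, ((n - 1).choose j : ℝ) * (-1) ^ j *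
      (((1 - z) ^ ((j : ℝ) - n - s - 1) - 1) / (s + n + 1 - j)) with hH_def
  have hzero : ∀ y ∈ Set.Ioo (-1:ℝ) 1, HasDerivAt (fun z => G z - H z) 0 y := by
    intro y hy
    have hy1 : |y| < 1 := abs_lt.mpr ⟨hy.1, hy.2⟩
    have h1 := hasDerivAt_G n hn hν hy1
    have h2 := hasDerivAt_H n hn s hs hy1
    rw [← hν_def] at h2
    have := h1.sub h2
    exact this.congr_deriv (sub_self _)
  have hconst : G t - H t = G 0 - H 0 :=
    const_of_hasDerivAt_zero (convex_Ioo (-1:ℝ) 1) isOpen_Ioo hzero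
      (abs_lt.mp ht) (by constructor <;> norm_num)
  have hG0 : G 0 = 0 := by
    show (∑' k : ℕ, AA ν k * (0:ℝ) ^ (n + k) / (k.factorial * ((n:ℝ) + k))) = 0
    have : ∀ k : ℕ, AA ν k * (0:ℝ) ^ (n + k) / (k.factorial * ((n:ℝ) + k)) = 0 := by
      intro k
      rw [zero_pow (show n + k ≠ 0 by omega)]
      ring
    rw [tsum_congr this, tsum_zero]
  have hH0 : H 0 = 0 := by
    show (∑ j ∈ range n, ((n - 1).choose j : ℝ) * (-1) ^ j *
      (((1 - (0:ℝ)) ^ ((j : ℝ) - n - s - 1) - 1) / (s + n + 1 - j))) = 0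
    refine Finset.sum_eq_zero fun j hj => ?_
    rw [show (1:ℝ) - 0 = 1 by ring, Real.one_rpow]
    ring
  have heq : G t = H t := by
    have := hconst
    rw [hG0, hH0] at this
    linarith
  have hGt : G t = t ^ n * ∑' k : ℕ, AA ν k * t ^ k / (k.factorial * ((n:ℝ) + k)) := by
    show (∑' k : ℕ, AA ν k * t ^ (n + k) / (k.factorial * ((n:ℝ) + k))) = _
    rw [← tsum_mul_left]
    refine tsum_congr fun k => ?_
    rw [pow_add]
    ring
  have htn : (t:ℝ) ^ n ≠ 0 := pow_ne_zero n ht0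
  show (∑' k : ℕ, AA ν k * t ^ k / (k.factorial * ((n:ℝ) + k))) = t ^ (-(n:ℤ)) * H t
  rw [zpow_neg, zpow_natCast, eq_comm, inv_mul_eq_iff_eq_mul₀ htn]
  rw [← heq, hGt]
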